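/- Let f : 𝔽₂ⁿ → ℤ/4ℤ be a ℤ/4ℤ-valued quadratic form with associated symmetric bilinear form B, and suppose B is alternating (B(x,x) = 0 for all x) with matrix of rank r over 𝔽₂. Then r is even, say r = 2g, and there exist a linear automorphism φ of 𝔽₂ⁿ and a vector w ∈ {0,1}^n such that for all y ∈ 𝔽₂ⁿ, f(φ(y)) = 2·Σ_{j=1}^{g} ỹ_{2j−1}·ỹ_{2j} + 2·Σ_{i=1}^{n} w_i·ỹ_i computed in ℤ/4ℤ, where ỹ_i ∈ {0,1} ⊆ ℤ/4ℤ denotes the representative of the coordinate y_i ∈ 𝔽₂. -/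

import Mathlib

/-- The embedding `ℤ/2ℤ → ℤ/4ℤ` sending `0 ↦ 0` and `1 ↦ 2`. -/
def emb2 (b : ZMod 2) : ZMod 4 := 2 * (b.val : ZMod 4)

set_option maxHeartbeats 1000000

/-- entries of the standard symplectic form matrix of rank `2g`. -/
def Jn (g i j : ℕ) : ZMod 2 :=
  if (i < 2*g ∧ j = i + 1 ∧ i % 2 = 0) ∨ (j < 2*g ∧ i = j + 1 ∧ j % 2 = 0) then 1 else 0

lemma Jn_lt {g i j : ℕ} (h : Jn g i j ≠ 0) : i < 2*g ∧ j < 2*g := by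
  by_contra hc
  apply h
  rw [Jn, if_neg]
  omega

theorem symp_basis : ∀ (m : ℕ) (V : Type) [AddCommGroup V] [Module (ZMod 2) V],
    ∀ (_ : FiniteDimensional (ZMod 2) V) (_ : Module.finrank (ZMod 2) V = m)
    (B : V →ₗ[ZMod 2] V →ₗ[ZMod 2] ZMod 2),
    (∀ x y, B x y = B y x) → (∀ x, B x x = 0) →
    ∃ g, 2*g ≤ m ∧ ∃ e : Module.Basis (Fin m) (ZMod 2) V, ∀ i j, B (e i) (e j) = Jn g i.1 j.1 := by
  intro m
  induction m using Nat.strong_induction_on with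
  | _ m IH =>
    intro V _ _ hfd hm B hsymm halt
    by_cases hB0 : ∀ x y : V, B x y = 0
    · refine ⟨0, by omega, (Module.finBasis (ZMod 2) V).reindex (finCongr hm), fun i j => ?_⟩
      rw [hB0, Jn, if_neg]; omega
    · push_neg at hB0
      obtain ⟨u, v, huv⟩ := hB0
      have huv1 : B u v = 1 := by
        rcases (show ∀ c : ZMod 2, c = 0 ∨ c = 1 by decide) (B u v) with h | h
        · exact absurd h huv
        · exact h
      have hvu1 : B v u = 1 := by rw [hsymm]; exact huv1
      set W : Submodule (ZMod 2) V := LinearMap.ker (B u) ⊓ LinearMap.ker (B v) with hW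
      have hmemW : ∀ x : V, x ∈ W ↔ B u x = 0 ∧ B v x = 0 := by
        intro x; simp [hW, LinearMap.mem_ker]
      -- decomposition
      have hdecomp : ∀ x : V, x + (B v x) • u + (B u x) • v ∈ W := by
        intro x
        rw [hmemW]
        have htwo : ∀ c : ZMod 2, c + c = 0 := by decide
        constructor
        · simp [halt, huv1, htwo]
        · simp [halt u, halt v, hvu1, htwo]
      have huW : u ∉ W := by rw [hmemW]; simp [hvu1]
      have hWfd : FiniteDimensional (ZMod 2) W := inferInstance
      set m' := Module.finrank (ZMod 2) (↥W) with hm'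
      have hWlt : m' < m := by
        rw [← hm]
        exact Submodule.finrank_lt (fun (h : W = ⊤) => huW (h ▸ Submodule.mem_top))
      obtain ⟨g', hg', f, hf⟩ := IH m' hWlt W inferInstance rfl
        (B.compl₁₂ W.subtype W.subtype) (fun x y => hsymm x y) (fun x => halt x)
      set ev : Fin (m' + 2) → V := fun i =>
        if h : i.1 = 0 then u else if h1 : i.1 = 1 then v else (f ⟨i.1 - 2, by omega⟩ : V)
        with hev
      have hev0 : ev 0 = u := by simp [hev]
      have hev1 : ev 1 = v := by
        simp only [hev]
        rw [dif_neg (by simp), dif_pos (by simp)]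
      have hev2 : ∀ k : Fin m', ev k.succ.succ = (f k : V) := by
        intro k
        simp only [hev, Fin.val_succ]
        rw [dif_neg (by omega), dif_neg (by omega)]
        congr 1
      have hfW : ∀ k : Fin m', B u ((f k : V)) = 0 ∧ B v ((f k : V)) = 0 := by
        intro k; exact (hmemW _).mp (f k).2
      have hBev : ∀ i j, B (ev i) (ev j) = Jn (g'+1) i.1 j.1 := by
        intro i j
        have hfij := hf
        simp only [LinearMap.compl₁₂_apply, Submodule.coe_subtype] at hfij
        simp only [hev]
        split_ifs with h1 h2 h3 h4 h5 h6 h7 h8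
        · rw [halt, Jn, if_neg (by omega)]
        · rw [huv1, Jn, if_pos (by omega)]
        · rw [(hfW _).1, Jn, if_neg (by omega)]
        · rw [hvu1, Jn, if_pos (by omega)]
        · rw [halt, Jn, if_neg (by omega)]
        · rw [(hfW _).2, Jn, if_neg (by omega)]
        · rw [hsymm, (hfW _).1, Jn, if_neg (by omega)]
        · rw [hsymm, (hfW _).2, Jn, if_neg (by omega)]
        · rw [hfij ⟨i.1 - 2, by omega⟩ ⟨j.1 - 2, by omega⟩]
          show Jn g' (i.1 - 2) (j.1 - 2) = _
          rw [Jn, Jn]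
          exact if_congr (by omega) rfl rfl
      have hVtwo : ∀ a : V, a + a = 0 := by
        intro a
        rw [← two_smul (ZMod 2) a, show (2 : ZMod 2) = 0 by decide, zero_smul]
      have hone : (1 : Fin (m'+2)).1 = 1 := rfl
      have hBv_ev : ∀ i : Fin (m'+2), i ≠ 0 → B v (ev i) = 0 := by
        intro i hi
        have hi' : i.1 ≠ 0 := fun h => hi (Fin.ext h)
        simp only [hev]
        rw [dif_neg hi']
        split_ifs with h
        · exact halt v
        · exact (hfW _).2
      have hBu_ev : ∀ i : Fin (m'+2), i ≠ 1 → B u (ev i) = 0 := by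
        intro i hi
        have hi' : i.1 ≠ 1 := fun h => hi (Fin.ext (by rw [h, hone]))
        simp only [hev]
        by_cases h0 : i.1 = 0
        · rw [dif_pos h0]; exact halt u
        · rw [dif_neg h0, dif_neg hi']; exact (hfW _).1
      have hsucc0 : ((0 : Fin (m'+1)).succ) = (1 : Fin (m'+2)) := rfl
      -- linear independence
      have hli : LinearIndependent (ZMod 2) ev := by
        rw [Fintype.linearIndependent_iff]
        intro c hc
        have hBsum : ∀ z : V, B z (∑ i, c i • ev i) = ∑ i, c i * B z (ev i) := by
          intro z
          rw [map_sum]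
          exact Finset.sum_congr rfl fun i _ => by rw [map_smul, smul_eq_mul]
        have hc0 : c 0 = 0 := by
          have h := hBsum v
          rw [hc, map_zero,
            Finset.sum_eq_single_of_mem 0 (Finset.mem_univ _)
              (fun i _ hi => by rw [hBv_ev i hi, mul_zero]), hev0, hvu1, mul_one] at h
          exact h.symm
        have hc1 : c 1 = 0 := by
          have h := hBsum u
          rw [hc, map_zero,
            Finset.sum_eq_single_of_mem 1 (Finset.mem_univ _)
              (fun i _ hi => by rw [hBu_ev i hi, mul_zero]), hev1, huv1, mul_one] at h
          exact h.symm
        rw [Fin.sum_univ_succ, Fin.sum_univ_succ, hsucc0, hc0, hc1, zero_smul, zero_smul,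
          zero_add, zero_add] at hc
        have hc' : ∑ k : Fin m', c k.succ.succ • (f k : V) = 0 := by
          rw [← hc]
          exact Finset.sum_congr rfl fun k _ => by rw [hev2]
        have hfin : ∑ k : Fin m', c k.succ.succ • f k = (0 : W) := by
          apply Submodule.injective_subtype W
          rw [map_sum, map_zero]
          simpa using hc'
        have hck := Fintype.linearIndependent_iff.mp f.linearIndependent _ hfin
        intro i
        by_cases hi0 : i = 0
        · rw [hi0]; exact hc0
        by_cases hi1 : i = 1
        · rw [hi1]; exact hc1
        have hi0' : i.1 ≠ 0 := fun h => hi0 (Fin.ext h)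
        have hi1' : i.1 ≠ 1 := fun h => hi1 (Fin.ext (by rw [h, hone]))
        have : i = (⟨i.1 - 2, by omega⟩ : Fin m').succ.succ := by
          apply Fin.ext; simp [Fin.val_succ]; omega
        rw [this]
        exact hck _
      -- spanning
      have hWspan : ∀ w' : W, (w' : V) ∈ Submodule.span (ZMod 2) (Set.range ev) := by
        intro w'
        have hrepr : ((∑ k, f.repr w' k • f k : W) : V) = (w' : V) := by rw [f.sum_repr w']
        rw [← hrepr]
        have hco : ((∑ k, f.repr w' k • f k : W) : V) = ∑ k, f.repr w' k • (f k : V) := by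
          simp only [Submodule.coe_sum, Submodule.coe_smul]
        rw [hco]
        exact Submodule.sum_mem _ fun k _ => Submodule.smul_mem _ _
          (Submodule.subset_span ⟨k.succ.succ, hev2 k⟩)
      have hsp : ⊤ ≤ Submodule.span (ZMod 2) (Set.range ev) := by
        intro x _
        have hx : x = (B v x) • u + (B u x) • v + (x + (B v x) • u + (B u x) • v) := by
          rw [show ∀ a b c : V, a + b + (c + a + b) = c + (a + a) + (b + b) from
            fun a b c => by abel, hVtwo, hVtwo, add_zero, add_zero]
        rw [hx]
        refine Submodule.add_mem _ (Submodule.add_mem _ ?_ ?_) ?_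
        · exact Submodule.smul_mem _ _ (Submodule.subset_span ⟨0, hev0⟩)
        · exact Submodule.smul_mem _ _ (Submodule.subset_span ⟨1, hev1⟩)
        · exact hWspan ⟨_, hdecomp x⟩
      have hm2 : m = m' + 2 := by
        rw [← hm, Module.finrank_eq_card_basis (Module.Basis.mk hli hsp), Fintype.card_fin]
      refine ⟨g' + 1, by omega, (Module.Basis.mk hli hsp).reindex (finCongr hm2.symm), fun i j => ?_⟩
      simp only [Module.Basis.reindex_apply, Module.Basis.coe_mk]
      rw [hBev]
      rfl

lemma q_sum {V : Type*} [AddCommGroup V] (q : V → ZMod 2) (B : V → V → ZMod 2)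
    (hsymm : ∀ x y, B x y = B y x)
    (hBadd : ∀ x y z, B (x + y) z = B x z + B y z)
    (hq0 : q 0 = 0) (hq : ∀ x y, q (x + y) = q x + q y + B x y)
    {ι : Type*} [LinearOrder ι] (v : ι → V) (s : Finset ι) :
    q (∑ i ∈ s, v i) = (∑ i ∈ s, q (v i)) +
      ∑ i ∈ s, ∑ j ∈ s.filter (· < i), B (v j) (v i) := by
  have hB0 : ∀ x, B x 0 = 0 := by
    intro x
    have h := hBadd 0 0 x
    rw [add_zero] at h
    have : B 0 x = 0 := by
      rcases (show ∀ c : ZMod 2, c = c + c → c = 0 by decide) (B 0 x) h with h'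
      exact h'
    rw [hsymm, this]
  have hBsum : ∀ (z : V) (t : Finset ι), B z (∑ j ∈ t, v j) = ∑ j ∈ t, B z (v j) := by
    intro z t
    induction t using Finset.cons_induction with
    | empty => simp [hB0]
    | cons a t ha IH =>
      rw [Finset.sum_cons, hsymm, hBadd, Finset.sum_cons, hsymm (v a) z, ← IH,
        hsymm (∑ x ∈ t, v x) z]
  induction s using Finset.cons_induction with
  | empty => simp [hq0]
  | cons a s ha IH =>
    have h3 : (Finset.cons a s ha).filter (· < a) = s.filter (· < a) := by
      rw [Finset.filter_cons, if_neg (lt_irrefl a)]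
    have h2 : ∀ i ∈ s, ∑ j ∈ (Finset.cons a s ha).filter (· < i), B (v j) (v i)
        = (if a < i then B (v a) (v i) else 0) + ∑ j ∈ s.filter (· < i), B (v j) (v i) := by
      intro i _
      rw [Finset.filter_cons]
      split_ifs with h
      · rw [Finset.sum_cons]
      · rw [zero_add]
    have h4 : ∑ j ∈ s.filter (· < a), B (v j) (v a)
        = ∑ j ∈ s, if j < a then B (v a) (v j) else 0 := by
      rw [Finset.sum_filter]
      exact Finset.sum_congr rfl fun j _ => by split_ifs <;> [rw [hsymm]; rfl]
    have h5 : ∑ j ∈ s, ((if j < a then B (v a) (v j) else 0) +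
        (if a < j then B (v a) (v j) else 0)) = ∑ j ∈ s, B (v a) (v j) := by
      refine Finset.sum_congr rfl fun j hj => ?_
      have hne : j ≠ a := fun h => ha (h ▸ hj)
      rcases lt_or_gt_of_ne hne with h | h
      · rw [if_pos h, if_neg (asymm h), add_zero]
      · rw [if_neg (asymm h), if_pos h, zero_add]
    have hT : ∑ i ∈ Finset.cons a s ha, ∑ j ∈ (Finset.cons a s ha).filter (· < i), B (v j) (v i)
        = (∑ i ∈ s, ∑ j ∈ s.filter (· < i), B (v j) (v i)) + ∑ j ∈ s, B (v a) (v j) := by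
      rw [Finset.sum_cons, h3, Finset.sum_congr rfl h2, Finset.sum_add_distrib, h4]
      rw [show ∀ x y z : ZMod 2, x + (y + z) = (x + y) + z from fun x y z => by ring,
        ← Finset.sum_add_distrib, h5]
      ring
    rw [Finset.sum_cons, hq, IH, hBsum, hT, Finset.sum_cons]
    ring

lemma emb2_sum {ι : Type*} (s : Finset ι) (F : ι → ZMod 2) :
    emb2 (∑ i ∈ s, F i) = ∑ i ∈ s, emb2 (F i) := by
  induction s using Finset.cons_induction with
  | empty => simp; decide
  | cons a s ha IH =>
    rw [Finset.sum_cons, Finset.sum_cons, ← IH]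
    exact (show ∀ a b : ZMod 2, emb2 (a + b) = emb2 a + emb2 b by decide) _ _


theorem stmt_8 (n : ℕ) (f : (Fin n → ZMod 2) → ZMod 4)
    (B : (Fin n → ZMod 2) → (Fin n → ZMod 2) → ZMod 2)
    (hsymm : ∀ x y, B x y = B y x)
    (hadd : ∀ x y z, B (x + y) z = B x z + B y z)
    (hf0 : f 0 = 0)
    (hf : ∀ x y, f (x + y) = f x + f y + emb2 (B x y))
    (halt : ∀ x, B x x = 0)
    (M : Matrix (Fin n) (Fin n) (ZMod 2))
    (hM : ∀ i j, M i j = B (Pi.single i 1) (Pi.single j 1))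
    (r : ℕ) (hr : r = M.rank) :
    ∃ g : ℕ, r = 2 * g ∧ ∃ hg : 2 * g ≤ n,
      ∃ (φ : (Fin n → ZMod 2) ≃ₗ[ZMod 2] (Fin n → ZMod 2)) (w : Fin n → Fin 2),
        ∀ y : Fin n → ZMod 2,
          f (φ y) =
            2 * (∑ j : Fin g, (((y ⟨2 * j.1, by omega⟩).val : ℕ) : ZMod 4) *
                  (((y ⟨2 * j.1 + 1, by omega⟩).val : ℕ) : ZMod 4)) +
            2 * ∑ i : Fin n, ((w i : ℕ) : ZMod 4) * (((y i).val : ℕ) : ZMod 4) := by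
  classical
  have h2c : ∀ c : ZMod 2, c = 0 ∨ c = 1 := by decide
  have hadd2 : ∀ x y z, B x (y + z) = B x y + B x z := fun x y z => by
    rw [hsymm, hadd, hsymm y x, hsymm z x]
  have hB0 : ∀ x, B 0 x = 0 := fun x => by
    have h := hadd 0 0 x
    rw [add_zero] at h
    exact (show ∀ c : ZMod 2, c = c + c → c = 0 by decide) _ h
  have hsmul : ∀ (c : ZMod 2) x y, B (c • x) y = c * B x y := by
    intro c x y
    rcases h2c c with h | h <;> subst h
    · rw [zero_smul, hB0, zero_mul]
    · rw [one_smul, one_mul]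
  have hsmul2 : ∀ (c : ZMod 2) x y, B x (c • y) = c * B x y := fun c x y => by
    rw [hsymm, hsmul, hsymm]
  set LB : (Fin n → ZMod 2) →ₗ[ZMod 2] (Fin n → ZMod 2) →ₗ[ZMod 2] ZMod 2 :=
    LinearMap.mk₂ (ZMod 2) B hadd (fun c x y => by rw [hsmul, smul_eq_mul])
      hadd2 (fun c x y => by rw [hsmul2, smul_eq_mul]) with hLB
  have hLBapp : ∀ x y, LB x y = B x y := fun x y => rfl
  obtain ⟨g, hg, e, hBe⟩ := symp_basis n (Fin n → ZMod 2) inferInstance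
    (Module.finrank_fin_fun (ZMod 2)) LB (fun x y => hsymm x y) (fun x => halt x)
  have hBe' : ∀ i j, B (e i) (e j) = Jn g i.1 j.1 := hBe
  -- the quadratic refinement
  set q : (Fin n → ZMod 2) → ZMod 2 := fun x => if f x = 2 then 1 else 0 with hqdef
  have hxx : ∀ x : Fin n → ZMod 2, x + x = 0 := fun x => by
    ext i
    exact (show ∀ c : ZMod 2, c + c = 0 by decide) _
  have hff : ∀ x, f x + f x = 0 := fun x => by
    have h := hf x x
    rw [hxx, hf0, halt, show emb2 0 = 0 by decide, add_zero] at h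
    exact h.symm
  have hqf : ∀ x, emb2 (q x) = f x := fun x =>
    (show ∀ a : ZMod 4, a + a = 0 → emb2 (if a = 2 then 1 else 0) = a by decide) _ (hff x)
  have emb2_inj : ∀ a b : ZMod 2, emb2 a = emb2 b → a = b := by decide
  have hq0 : q 0 = 0 := by
    rw [hqdef]
    simp only [hf0]
    decide
  have hq : ∀ x y, q (x + y) = q x + q y + B x y := by
    intro x y
    apply emb2_inj
    rw [show ∀ a b c : ZMod 2, emb2 (a + b + c) = emb2 a + emb2 b + emb2 c by decide,
      hqf, hqf, hqf, hf]
  have hqsmul : ∀ (c : ZMod 2) x, q (c • x) = c * q x := by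
    intro c x
    rcases h2c c with h | h <;> subst h
    · rw [zero_smul, hq0, zero_mul]
    · rw [one_smul, one_mul]
  -- rank computation
  have hrank : M.rank = 2 * g := by
    set A : Matrix (Fin n) (Fin n) (ZMod 2) :=
      Matrix.of (fun i k => e.repr (Pi.single i 1) k) with hA
    set JJ : Matrix (Fin n) (Fin n) (ZMod 2) :=
      Matrix.of (fun k l : Fin n => Jn g k.1 l.1) with hJJ
    have hBsum2 : ∀ (z : Fin n → ZMod 2) (c : Fin n → ZMod 2),
        B z (∑ l, c l • e l) = ∑ l, c l * B z (e l) := by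
      intro z c
      rw [← hLBapp, map_sum]
      exact Finset.sum_congr rfl fun l _ => by rw [map_smul, smul_eq_mul, hLBapp]
    have hBsum1 : ∀ (z : Fin n → ZMod 2) (c : Fin n → ZMod 2),
        B (∑ k, c k • e k) z = ∑ k, c k * B (e k) z := by
      intro z c
      rw [hsymm, hBsum2]
      exact Finset.sum_congr rfl fun k _ => by rw [hsymm]
    have hMA : M = A * JJ * A.transpose := by
      ext i j
      have hsingle : ∀ i : Fin n, Pi.single i 1 = ∑ k, A i k • e k :=
        fun i => (e.sum_repr _).symm
      rw [hM i j, hsingle i, hsingle j, hBsum1]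
      simp_rw [hBsum2]
      simp only [Matrix.mul_apply, Matrix.transpose_apply, Finset.sum_mul, Finset.mul_sum]
      rw [Finset.sum_comm]
      refine Finset.sum_congr rfl fun k _ => Finset.sum_congr rfl fun l _ => ?_
      rw [hBe']
      simp only [hJJ, Matrix.of_apply]
      ring
    have hdetA : IsUnit A.det := by
      have hAt : A = (e.toMatrix (Pi.basisFun (ZMod 2) (Fin n))).transpose := by
        ext i k
        rw [Matrix.transpose_apply, Module.Basis.toMatrix_apply, Pi.basisFun_apply]
        rfl
      have : Invertible (e.toMatrix (Pi.basisFun (ZMod 2) (Fin n))) :=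
        e.invertibleToMatrix (Pi.basisFun (ZMod 2) (Fin n))
      rw [hAt, Matrix.det_transpose]
      exact (Matrix.isUnit_iff_isUnit_det _).mp (isUnit_of_invertible _)
    have hdetAt : IsUnit A.transpose.det := by rwa [Matrix.det_transpose]
    have hD : JJ * JJ = Matrix.diagonal (fun i : Fin n => if i.1 < 2*g then (1 : ZMod 2) else 0) := by
      ext i k
      rw [Matrix.mul_apply, Matrix.diagonal_apply]
      by_cases hi : i.1 < 2*g
      · have hpar := Nat.mod_two_eq_zero_or_one i.1
        rcases hpar with hpar | hpar
        · set p : Fin n := ⟨i.1 + 1, by omega⟩ with hp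
          rw [Finset.sum_eq_single_of_mem p (Finset.mem_univ _) (fun b _ hb => by
            have hbp : b.1 ≠ i.1 + 1 := fun hh => hb (Fin.ext hh)
            have hz : JJ i b = 0 := by
              show Jn g i.1 b.1 = 0
              rw [Jn, if_neg (by omega)]
            rw [hz, zero_mul])]
          have h1 : JJ i p = 1 := by
            show Jn g i.1 (i.1 + 1) = 1
            rw [Jn, if_pos (by omega)]
          rw [h1, one_mul]
          show Jn g (i.1 + 1) k.1 = _
          by_cases hik : i = k
          · rw [if_pos hik, if_pos hi, ← hik, Jn, if_pos (by omega)]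
          · have : i.1 ≠ k.1 := fun hh => hik (Fin.ext hh)
            rw [if_neg hik, Jn, if_neg (by omega)]
        · set p : Fin n := ⟨i.1 - 1, by omega⟩ with hp
          rw [Finset.sum_eq_single_of_mem p (Finset.mem_univ _) (fun b _ hb => by
            have hbp : b.1 ≠ i.1 - 1 := fun hh => hb (Fin.ext hh)
            have hz : JJ i b = 0 := by
              show Jn g i.1 b.1 = 0
              rw [Jn, if_neg (by omega)]
            rw [hz, zero_mul])]
          have h1 : JJ i p = 1 := by
            show Jn g i.1 (i.1 - 1) = 1
            rw [Jn, if_pos (by omega)]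
          rw [h1, one_mul]
          show Jn g (i.1 - 1) k.1 = _
          by_cases hik : i = k
          · rw [if_pos hik, if_pos hi, ← hik, Jn, if_pos (by omega)]
          · have : i.1 ≠ k.1 := fun hh => hik (Fin.ext hh)
            rw [if_neg hik, Jn, if_neg (by omega)]
      · rw [Finset.sum_eq_zero (fun b _ => by
          have hz : JJ i b = 0 := by
            by_contra h
            exact hi (Jn_lt h).1
          rw [hz, zero_mul])]
        split_ifs <;> rfl
    have hJ3 : JJ * JJ * JJ = JJ := by
      rw [hD]
      ext i k
      rw [Matrix.diagonal_mul]
      by_cases hi : i.1 < 2*g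
      · rw [if_pos hi, one_mul]
      · rw [if_neg hi, zero_mul]
        symm
        by_contra h
        exact hi (Jn_lt h).1
    have hcard : Fintype.card {i : Fin n // (fun i : Fin n =>
        if i.1 < 2*g then (1 : ZMod 2) else 0) i ≠ 0} = 2 * g := by
      have hiff : ∀ i : Fin n,
          ((if i.1 < 2*g then (1 : ZMod 2) else 0) ≠ 0) ↔ i.1 < 2*g := by
        intro i
        split_ifs with h <;> simp [h]
      rw [Fintype.card_congr ((Equiv.subtypeEquivRight hiff).trans
        { toFun := fun x => (⟨x.1.1, x.2⟩ : Fin (2*g)),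
          invFun := fun k => ⟨⟨k.1, by omega⟩, k.2⟩,
          left_inv := fun x => by ext; rfl,
          right_inv := fun k => by ext; rfl }), Fintype.card_fin]
    have hrankD : (JJ * JJ).rank = 2 * g := by
      rw [hD, Matrix.rank_diagonal, hcard]
    have h1 : JJ.rank ≤ (JJ * JJ).rank := by
      conv_lhs => rw [← hJ3]
      exact Matrix.rank_mul_le_left _ _
    have h2 : (JJ * JJ).rank ≤ JJ.rank := Matrix.rank_mul_le_left JJ JJ
    have hrankJ : JJ.rank = 2 * g := by omega
    rw [hMA, Matrix.rank_mul_eq_left_of_isUnit_det A.transpose (A * JJ) hdetAt,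
      Matrix.rank_mul_eq_right_of_isUnit_det A JJ hdetA, hrankJ]
  -- main formula
  refine ⟨g, by rw [hr, hrank], hg, e.equivFun.symm, fun i => if q (e i) = 1 then 1 else 0,
    fun y => ?_⟩
  have emb2_add' : ∀ a b : ZMod 2, emb2 (a + b) = emb2 a + emb2 b := by decide
  have dlem1 : ∀ a b : ZMod 2, emb2 (a * b) =
      2 * (((((if b = 1 then (1 : Fin 2) else 0) : Fin 2) : ℕ) : ZMod 4) *
        ((a.val : ℕ) : ZMod 4)) := by decide
  have dlem2 : ∀ a b c : ZMod 2, emb2 (a * (b * c)) =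
      2 * (((a.val : ℕ) : ZMod 4) * ((b.val : ℕ) : ZMod 4) * ((c.val : ℕ) : ZMod 4)) := by
    decide
  have hmain := q_sum q B hsymm hadd hq0 hq (fun i => y i • e i) Finset.univ
  rw [e.equivFun_symm_apply, ← hqf, hmain, emb2_add', emb2_sum, emb2_sum]
  set F : ℕ → ZMod 4 := fun t =>
    if h : t < n ∧ 1 ≤ t then
      (((y ⟨t - 1, by omega⟩).val : ℕ) : ZMod 4) * (((y ⟨t, h.1⟩).val : ℕ) : ZMod 4)
    else 0 with hF
  have hS1 : ∑ i : Fin n, emb2 (q (y i • e i)) =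
      2 * ∑ i : Fin n, ((((if q (e i) = 1 then (1 : Fin 2) else 0) : Fin 2) : ℕ) : ZMod 4) *
        (((y i).val : ℕ) : ZMod 4) := by
    rw [Finset.mul_sum]
    exact Finset.sum_congr rfl fun i _ => by rw [hqsmul]; exact dlem1 (y i) (q (e i))
  have hterm2 : ∀ i j : Fin n, emb2 (B (y j • e j) (y i • e i)) =
      2 * ((((y j).val : ℕ) : ZMod 4) * (((y i).val : ℕ) : ZMod 4) *
        (((Jn g j.1 i.1).val : ℕ) : ZMod 4)) := by
    intro i j
    rw [hsmul, hsmul2, hBe']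
    exact dlem2 (y j) (y i) (Jn g j.1 i.1)
  have hstepA : ∀ i : Fin n,
      ∑ j ∈ Finset.univ.filter (· < i), ((((y j).val : ℕ) : ZMod 4) *
        (((y i).val : ℕ) : ZMod 4) * (((Jn g j.1 i.1).val : ℕ) : ZMod 4)) =
      if i.1 % 2 = 1 ∧ i.1 < 2*g then F i.1 else 0 := by
    intro i
    by_cases hcond : i.1 % 2 = 1 ∧ i.1 < 2*g
    · rw [if_pos hcond]
      have hlt : (⟨i.1 - 1, by omega⟩ : Fin n) < i := by
        rw [Fin.lt_def]
        show i.1 - 1 < i.1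
        omega
      rw [Finset.sum_eq_single_of_mem (⟨i.1 - 1, by omega⟩ : Fin n)
        (show (⟨i.1 - 1, by omega⟩ : Fin n) ∈ Finset.univ.filter (· < i) from
          Finset.mem_filter.mpr ⟨Finset.mem_univ _, hlt⟩) (fun b hb hbne => by
          have hbi : b.1 < i.1 := (Finset.mem_filter.mp hb).2
          have hbv : b.1 ≠ i.1 - 1 := fun hh => hbne (Fin.ext hh)
          have hz : Jn g b.1 i.1 = 0 := by rw [Jn, if_neg (by omega)]
          rw [hz]
          simp)]
      have h1 : Jn g (i.1 - 1) i.1 = 1 := by rw [Jn, if_pos (by omega)]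
      show _ * (((Jn g (i.1 - 1) i.1).val : ℕ) : ZMod 4) = F i.1
      rw [h1]
      simp only [ZMod.val_one, Nat.cast_one, mul_one, hF]
      rw [dif_pos (⟨by omega, by omega⟩ : i.1 < n ∧ 1 ≤ i.1)]
    · rw [if_neg hcond]
      refine Finset.sum_eq_zero fun b hb => ?_
      have hbi : b.1 < i.1 := (Finset.mem_filter.mp hb).2
      have hz : Jn g b.1 i.1 = 0 := by rw [Jn, if_neg (by omega)]
      rw [hz]
      simp
  have hstepB : ∑ i : Fin n, (if i.1 % 2 = 1 ∧ i.1 < 2*g then F i.1 else 0) =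
      ∑ k : Fin g, F (2*k.1 + 1) := by
    rw [← Finset.sum_filter]
    refine (Finset.sum_bij' (fun (k : Fin g) (_ : k ∈ Finset.univ) => (⟨2*k.1 + 1, by
        have hk := k.2; omega⟩ : Fin n))
      (fun (i : Fin n) hi => (⟨i.1 / 2, by
        have hii := (Finset.mem_filter.mp hi).2; omega⟩ : Fin g)) ?_ ?_ ?_ ?_ ?_).symm
    · intro k _
      refine Finset.mem_filter.mpr ⟨Finset.mem_univ _, ?_⟩
      show (2*k.1 + 1) % 2 = 1 ∧ 2*k.1 + 1 < 2*g
      have hk := k.2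
      omega
    · intro i _
      exact Finset.mem_univ _
    · intro k _
      apply Fin.ext
      show (2*k.1 + 1) / 2 = k.1
      omega
    · intro i hi
      apply Fin.ext
      show 2*(i.1 / 2) + 1 = i.1
      have hii := (Finset.mem_filter.mp hi).2
      omega
    · intro k _
      rfl
  have hstepC : ∑ k : Fin g, F (2*k.1 + 1) =
      ∑ j : Fin g, (((y ⟨2 * j.1, by omega⟩).val : ℕ) : ZMod 4) *
        (((y ⟨2 * j.1 + 1, by omega⟩).val : ℕ) : ZMod 4) := by
    refine Finset.sum_congr rfl fun k _ => ?_
    have hk := k.2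
    simp only [hF]
    rw [dif_pos (⟨by omega, by omega⟩ : 2*k.1 + 1 < n ∧ 1 ≤ 2*k.1 + 1)]
    congr 2
  have hS2 : ∑ i : Fin n, emb2 (∑ j ∈ Finset.univ.filter (· < i),
      B (y j • e j) (y i • e i)) =
      2 * ∑ j : Fin g, (((y ⟨2 * j.1, by omega⟩).val : ℕ) : ZMod 4) *
        (((y ⟨2 * j.1 + 1, by omega⟩).val : ℕ) : ZMod 4) := by
    calc ∑ i : Fin n, emb2 (∑ j ∈ Finset.univ.filter (· < i), B (y j • e j) (y i • e i))
        = ∑ i : Fin n, ∑ j ∈ Finset.univ.filter (· < i), emb2 (B (y j • e j) (y i • e i)) :=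
          Finset.sum_congr rfl fun i _ => emb2_sum _ _
      _ = ∑ i : Fin n, ∑ j ∈ Finset.univ.filter (· < i),
            2 * ((((y j).val : ℕ) : ZMod 4) * (((y i).val : ℕ) : ZMod 4) *
              (((Jn g j.1 i.1).val : ℕ) : ZMod 4)) :=
          Finset.sum_congr rfl fun i _ => Finset.sum_congr rfl fun j _ => hterm2 i j
      _ = 2 * ∑ i : Fin n, ∑ j ∈ Finset.univ.filter (· < i),
            ((((y j).val : ℕ) : ZMod 4) * (((y i).val : ℕ) : ZMod 4) *
              (((Jn g j.1 i.1).val : ℕ) : ZMod 4)) := by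
          rw [Finset.mul_sum]
          exact Finset.sum_congr rfl fun i _ => (Finset.mul_sum _ _ _).symm
      _ = 2 * ∑ i : Fin n, (if i.1 % 2 = 1 ∧ i.1 < 2*g then F i.1 else 0) := by
          rw [Finset.sum_congr rfl fun i _ => hstepA i]
      _ = _ := by rw [hstepB, hstepC]
  rw [hS1, hS2]
  ring
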